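/- For every u in the Schwartz space 𝒮(ℝⁿ), every x ∈ ℝⁿ, every s ≥ 0 and every t > s, the map t ↦ H_{t,s}u(x) is differentiable at t and its derivative satisfies ∂/∂t H_{t,s}u(x) = −(2π)^{−n/2} ∫_{ℝⁿ} e^{ix·ξ} q(t,ξ) exp(−∫_s^t q(τ,ξ)dτ) û(ξ) dξ, i.e. ∂/∂t H_{t,s}u = −q(t,D)H_{t,s}u where q(t,D) is the pseudo-differential operator with symbol q(t,ξ). -/

import Mathlib

open MeasureTheory Real Filter intervalIntegral

/-- The Fourier transform with normalization `(2π)^(-n/2)`. -/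
noncomputable def fourierTransform {n : ℕ} (u : EuclideanSpace ℝ (Fin n) → ℂ)
    (ξ : EuclideanSpace ℝ (Fin n)) : ℂ :=
  (((2 * π) ^ (-(n : ℝ) / 2) : ℝ) : ℂ) *
    ∫ x, Complex.exp (-(Complex.I * ((inner ℝ x ξ : ℝ) : ℂ))) * u x

/-- The operator `H_{t,s}` with symbol `exp(-∫_s^t q(τ,ξ)dτ)`. -/
noncomputable def Hop {n : ℕ} (q : ℝ → EuclideanSpace ℝ (Fin n) → ℝ)
    (t s : ℝ) (u : EuclideanSpace ℝ (Fin n) → ℂ) (x : EuclideanSpace ℝ (Fin n)) : ℂ :=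
  (((2 * π) ^ (-(n : ℝ) / 2) : ℝ) : ℂ) *
    ∫ ξ, Complex.exp (Complex.I * ((inner ℝ x ξ : ℝ) : ℂ)) *
      Complex.exp (-(((∫ τ in s..t, q τ ξ) : ℝ) : ℂ)) * fourierTransform u ξ

theorem stmt0 {n : ℕ} (hn : 1 ≤ n)
    (q : ℝ → EuclideanSpace ℝ (Fin n) → ℝ)
    (hq_cont : ContinuousOn (fun p : ℝ × EuclideanSpace ℝ (Fin n) => q p.1 p.2)
      (Set.Ici (0 : ℝ) ×ˢ Set.univ))
    (C : ℝ) (hC : 0 < C)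
    (hq_bound : ∀ τ, 0 ≤ τ → ∀ ξ, 0 ≤ q τ ξ ∧ q τ ξ ≤ C * (1 + ‖ξ‖ ^ 2))
    (u : SchwartzMap (EuclideanSpace ℝ (Fin n)) ℂ)
    (x : EuclideanSpace ℝ (Fin n)) (s t : ℝ) (hs : 0 ≤ s) (hst : s < t) :
    HasDerivAt (fun t' => Hop q t' s (⇑u) x)
      (-((((2 * π) ^ (-(n : ℝ) / 2) : ℝ) : ℂ) *
        ∫ ξ, Complex.exp (Complex.I * ((inner ℝ x ξ : ℝ) : ℂ)) * ((q t ξ : ℝ) : ℂ) *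
          Complex.exp (-(((∫ τ in s..t, q τ ξ) : ℝ) : ℂ)) * fourierTransform (⇑u) ξ)) t := by
  classical
  have h2π : (0:ℝ) < 2 * π := by positivity
  set c₀ : ℝ := (2 * π) ^ (-(n : ℝ) / 2) with hc₀def
  have hc₀ : 0 < c₀ := Real.rpow_pos_of_pos h2π _
  -- the extended symbol, continuous everywhere
  set Q : ℝ → (EuclideanSpace ℝ (Fin n)) → ℝ := fun τ ξ => q (max τ 0) ξ with hQdef
  have hQcont : Continuous fun p : ℝ × (EuclideanSpace ℝ (Fin n)) => Q p.1 p.2 := by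
    have hmax : Continuous fun p : ℝ × (EuclideanSpace ℝ (Fin n)) => ((max p.1 0, p.2) : ℝ × (EuclideanSpace ℝ (Fin n))) :=
      (continuous_fst.max continuous_const).prodMk continuous_snd
    simp only [hQdef]
    exact hq_cont.comp_continuous hmax fun p => ⟨show (0:ℝ) ≤ max p.1 0 from le_max_right _ _, trivial⟩
  have hQeq : ∀ τ, 0 ≤ τ → ∀ ξ, Q τ ξ = q τ ξ := by
    intro τ hτ ξ; simp [hQdef, max_eq_left hτ]
  have hQ0 : ∀ τ (ξ : (EuclideanSpace ℝ (Fin n))), 0 ≤ Q τ ξ := by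
    intro τ ξ; simp only [hQdef]; exact (hq_bound _ (le_max_right _ _) ξ).1
  have hQC : ∀ τ (ξ : (EuclideanSpace ℝ (Fin n))), Q τ ξ ≤ C * (1 + ‖ξ‖ ^ 2) := by
    intro τ ξ; simp only [hQdef]; exact (hq_bound _ (le_max_right _ _) ξ).2
  have hQξ : ∀ ξ : (EuclideanSpace ℝ (Fin n)), Continuous fun τ => Q τ ξ := fun ξ =>
    hQcont.comp (continuous_id.prodMk continuous_const)
  -- the accumulated symbol
  set A : ℝ → (EuclideanSpace ℝ (Fin n)) → ℝ := fun t' ξ => ∫ τ in s..t', Q τ ξ with hAdef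
  have hAeq : ∀ t', 0 ≤ t' → ∀ ξ, (∫ τ in s..t', q τ ξ) = A t' ξ := by
    intro t' ht' ξ
    refine intervalIntegral.integral_congr fun τ hτ => ?_
    have : 0 ≤ τ := le_trans (le_min hs ht') hτ.1
    exact (hQeq τ this ξ).symm
  have hAderiv : ∀ (t' : ℝ) (ξ : (EuclideanSpace ℝ (Fin n))), HasDerivAt (fun r => A r ξ) (Q t' ξ) t' := by
    intro t' ξ
    exact intervalIntegral.integral_hasDerivAt_right
      ((hQξ ξ).intervalIntegrable _ _)
      ((hQξ ξ).stronglyMeasurable.stronglyMeasurableAtFilter)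
      (hQξ ξ).continuousAt
  have hAnonneg : ∀ t', s ≤ t' → ∀ ξ, 0 ≤ A t' ξ := by
    intro t' ht' ξ
    exact intervalIntegral.integral_nonneg ht' fun τ _ => hQ0 τ ξ
  have hAcont : ∀ t', Continuous fun ξ : (EuclideanSpace ℝ (Fin n)) => A t' ξ := by
    intro t'
    have hunc : Continuous (Function.uncurry fun (ξ : (EuclideanSpace ℝ (Fin n))) (τ : ℝ) => Q τ ξ) := by
      exact hQcont.comp (continuous_snd.prodMk continuous_fst)
    simp only [hAdef]
    exact intervalIntegral.continuous_parametric_intervalIntegral_of_continuous' hunc s t'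
  -- the Fourier transform as a Schwartz function
  have hπne : ((2 * π)⁻¹ : ℝ) ≠ 0 := inv_ne_zero (ne_of_gt h2π)
  let eScale : (EuclideanSpace ℝ (Fin n)) ≃L[ℝ] (EuclideanSpace ℝ (Fin n)) :=
    (LinearEquiv.smulOfNeZero ℝ (EuclideanSpace ℝ (Fin n)) ((2 * π)⁻¹) hπne).toContinuousLinearEquiv
  let G : SchwartzMap (EuclideanSpace ℝ (Fin n)) ℂ :=
    SchwartzMap.compCLMOfContinuousLinearEquiv ℝ eScale
      (FourierTransform.fourierCLE ℂ (SchwartzMap (EuclideanSpace ℝ (Fin n)) ℂ) u)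
  have hG : ∀ ξ : (EuclideanSpace ℝ (Fin n)), G ξ = FourierTransform.fourier (⇑u) ((2 * π)⁻¹ • ξ) := by
    intro ξ
    simp only [G, SchwartzMap.compCLMOfContinuousLinearEquiv_apply, Function.comp_apply,
      FourierTransform.fourierCLE_apply, SchwartzMap.fourier_coe]
    congr 1
  have hFT : ∀ ξ : (EuclideanSpace ℝ (Fin n)), fourierTransform (⇑u) ξ = (c₀ : ℂ) * G ξ := by
    intro ξ
    rw [hG, Real.fourier_eq']
    unfold fourierTransform
    rw [← hc₀def]
    congr 1
    refine integral_congr_ae (Filter.Eventually.of_forall fun v => ?_)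
    simp only [smul_eq_mul]
    congr 1
    have hinner : (inner ℝ v ((2 * π)⁻¹ • ξ) : ℝ) = (2 * π)⁻¹ * (inner ℝ v ξ : ℝ) :=
      real_inner_smul_right v ξ _
    rw [hinner]
    have : -2 * π * ((2 * π)⁻¹ * (inner ℝ v ξ : ℝ)) = -(inner ℝ v ξ : ℝ) := by
      field_simp
    rw [this]
    push_cast
    ring
  -- integrability facts
  have hGint : Integrable (fun ξ : (EuclideanSpace ℝ (Fin n)) => ‖G ξ‖) := G.integrable.norm
  have hGint2 : Integrable (fun ξ : (EuclideanSpace ℝ (Fin n)) => ‖ξ‖ ^ 2 * ‖G ξ‖) := by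
    simpa using G.integrable_pow_mul (μ := volume) 2
  set bound : (EuclideanSpace ℝ (Fin n)) → ℝ := fun ξ => C * c₀ * (‖G ξ‖ + ‖ξ‖ ^ 2 * ‖G ξ‖) with hbounddef
  have hbound_int : Integrable bound := (hGint.add hGint2).const_mul _
  -- the parametric family
  set F : ℝ → (EuclideanSpace ℝ (Fin n)) → ℂ := fun t' ξ =>
    Complex.exp (Complex.I * ((inner ℝ x ξ : ℝ) : ℂ)) *
      Complex.exp (-((A t' ξ : ℝ) : ℂ)) * ((c₀ : ℂ) * G ξ) with hFdef
  set F' : ℝ → (EuclideanSpace ℝ (Fin n)) → ℂ := fun t' ξ => -(((Q t' ξ : ℝ) : ℂ) * F t' ξ) with hF'def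
  have hnormF : ∀ t' ξ, s ≤ t' → ‖F t' ξ‖ ≤ c₀ * ‖G ξ‖ := by
    intro t' ξ ht'
    have h3 : Real.exp (-(A t' ξ)) ≤ 1 :=
      Real.exp_le_one_iff.mpr (neg_nonpos.mpr (hAnonneg t' ht' ξ))
    have key : ‖F t' ξ‖ = Real.exp (-(A t' ξ)) * (c₀ * ‖G ξ‖) := by
      rw [hFdef]
      simp only [norm_mul, Complex.norm_exp, Complex.mul_re,
        Complex.I_re, Complex.ofReal_re, Complex.I_im, Complex.ofReal_im, Complex.neg_re,
        zero_mul, mul_zero, one_mul, mul_one, sub_zero, zero_sub, neg_zero, Real.exp_zero,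
        Complex.norm_real, Real.norm_eq_abs, abs_of_pos hc₀]
      try ring
    rw [key]
    calc Real.exp (-(A t' ξ)) * (c₀ * ‖G ξ‖) ≤ 1 * (c₀ * ‖G ξ‖) := by
          apply mul_le_mul_of_nonneg_right h3; positivity
      _ = c₀ * ‖G ξ‖ := one_mul _
  have hFcont : ∀ t', Continuous (F t') := by
    intro t'
    refine Continuous.mul (Continuous.mul ?_ ?_) ?_
    · exact Complex.continuous_exp.comp
        (continuous_const.mul (Complex.continuous_ofReal.comp
          ((continuous_const.inner continuous_id))))
    · exact Complex.continuous_exp.comp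
        ((Complex.continuous_ofReal.comp (hAcont t')).neg)
    · exact continuous_const.mul G.continuous
  have hFmeas : ∀ t', AEStronglyMeasurable (F t') volume := fun t' =>
    (hFcont t').aestronglyMeasurable
  have hFint : Integrable (F t) volume := by
    refine (hGint.const_mul c₀).mono (hFmeas t) ?_
    refine Filter.Eventually.of_forall fun ξ => ?_
    exact (hnormF t ξ hst.le).trans (le_abs_self _)
  have hF'cont : Continuous (F' t) := by
    refine Continuous.neg (Continuous.mul ?_ (hFcont t))
    exact Complex.continuous_ofReal.comp
      (hQcont.comp (continuous_const.prodMk continuous_id))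
  -- the dominated differentiation
  set ε : ℝ := (t - s) / 2 with hεdef
  have hε : 0 < ε := by simp only [hεdef]; linarith
  have hball : ∀ t' ∈ Metric.ball t ε, s < t' := by
    intro t' ht'
    rw [Metric.mem_ball, Real.dist_eq, abs_lt] at ht'
    linarith [ht'.1]
  have h_bound : ∀ᵐ ξ ∂(volume : Measure (EuclideanSpace ℝ (Fin n))), ∀ t' ∈ Metric.ball t ε,
      ‖F' t' ξ‖ ≤ bound ξ := by
    refine Filter.Eventually.of_forall fun ξ t' ht' => ?_
    have hs' : s ≤ t' := (hball t' ht').le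
    rw [hF'def]
    simp only [norm_neg, norm_mul, Complex.norm_real]
    rw [Real.norm_of_nonneg (hQ0 t' ξ)]
    calc Q t' ξ * ‖F t' ξ‖ ≤ (C * (1 + ‖ξ‖ ^ 2)) * (c₀ * ‖G ξ‖) := by
          apply mul_le_mul (hQC t' ξ) (hnormF t' ξ hs') (norm_nonneg _)
          positivity
      _ = bound ξ := by rw [hbounddef]; ring
  have h_diff : ∀ᵐ ξ ∂(volume : Measure (EuclideanSpace ℝ (Fin n))), ∀ t' ∈ Metric.ball t ε,
      HasDerivAt (fun r => F r ξ) (F' t' ξ) t' := by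
    refine Filter.Eventually.of_forall fun ξ t' _ => ?_
    have h1 : HasDerivAt (fun r => ((A r ξ : ℝ) : ℂ)) ((Q t' ξ : ℝ) : ℂ) t' :=
      HasDerivAt.ofReal_comp (hAderiv t' ξ)
    have h2 : HasDerivAt (fun r => Complex.exp (-((A r ξ : ℝ) : ℂ)))
        (Complex.exp (-((A t' ξ : ℝ) : ℂ)) * (-((Q t' ξ : ℝ) : ℂ))) t' := by
      simpa using (h1.neg).cexp
    have h3 := (h2.const_mul (Complex.exp (Complex.I * ((inner ℝ x ξ : ℝ) : ℂ)))).mul_const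
      ((c₀ : ℂ) * G ξ)
    refine h3.congr_deriv ?_
    rw [hF'def, hFdef]
    ring
  have main := _root_.hasDerivAt_integral_of_dominated_loc_of_deriv_le (Metric.ball_mem_nhds t hε)
    (Filter.Eventually.of_forall hFmeas) hFint hF'cont.aestronglyMeasurable
    h_bound hbound_int h_diff
  have hmain : HasDerivAt (fun t' => (c₀ : ℂ) * ∫ ξ, F t' ξ)
      ((c₀ : ℂ) * ∫ ξ, F' t ξ) t := main.2.const_mul _
  -- identify with the original statement
  have heq : (fun t' => Hop q t' s (⇑u) x) =ᶠ[nhds t] (fun t' => (c₀ : ℂ) * ∫ ξ, F t' ξ) := by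
    filter_upwards [Metric.ball_mem_nhds t hε] with t' ht'
    have ht0 : 0 ≤ t' := le_trans hs (hball t' ht').le
    unfold Hop
    rw [← hc₀def]
    congr 1
    refine integral_congr_ae (Filter.Eventually.of_forall fun ξ => ?_)
    rw [hFdef]
    simp only
    rw [hAeq t' ht0 ξ, hFT ξ]
  have hderiv_eq : (c₀ : ℂ) * ∫ ξ, F' t ξ =
      -(((c₀ : ℝ) : ℂ) *
        ∫ ξ : (EuclideanSpace ℝ (Fin n)), Complex.exp (Complex.I * ((inner ℝ x ξ : ℝ) : ℂ)) * ((q t ξ : ℝ) : ℂ) *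
          Complex.exp (-(((∫ τ in s..t, q τ ξ) : ℝ) : ℂ)) * fourierTransform (⇑u) ξ) := by
    rw [← mul_neg]
    congr 1
    rw [← MeasureTheory.integral_neg]
    refine integral_congr_ae (Filter.Eventually.of_forall fun ξ => ?_)
    rw [hF'def, hFdef]
    simp only
    rw [hQeq t (le_trans hs hst.le) ξ, ← hAeq t (le_trans hs hst.le) ξ, hFT ξ]
    ring
  rw [show (((2 * π) ^ (-(n : ℝ) / 2) : ℝ) : ℂ) = ((c₀ : ℝ) : ℂ) from rfl]
  rw [hderiv_eq] at hmain
  exact hmain.congr_of_eventuallyEq heq
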